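/- Let (X,Y) ∼ D where D is a probability distribution on {-1,1}^d × {-1,1}, and let k ≤ d. Then the minimum 0-1 loss over all k-juntas satisfies: min over k-juntas g of P{Y ≠ g(X)} = 1/2 − (1/2)·max over subsets J ⊆ {1,…,d} with |J| = k of Σ_{x ∈ {-1,1}^d} |f^J(x)|, where f^J(x) = Σ_{S⊆J} a_S·χ_S(x) and a_S = 2^{−d}·E[Y·χ_S(X)]. -/

import Mathlib

open MeasureTheory ProbabilityTheory
open scoped Classical

/-- The character (monomial) `χ_S(x) = ∏_{j ∈ S} x_j` associated with `S ⊆ [d]`. -/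
noncomputable def chiChar {d : ℕ} (S : Finset (Fin d)) (x : Fin d → ℝ) : ℝ := ∏ j ∈ S, x j

/-- The point of the Boolean cube `{-1,1}^d` encoded by a Boolean vector. -/
noncomputable def pmOf {d : ℕ} (b : Fin d → Bool) : Fin d → ℝ :=
  fun i => if b i then 1 else -1

/-- The stochastic Fourier coefficient `a_S = 2^{-d}·E[Y·χ_S(X)]` of the label under `D`. -/
noncomputable def coeffA {d : ℕ} (D : Measure ((Fin d → ℝ) × ℝ)) (S : Finset (Fin d)) : ℝ :=
  (1 / 2 ^ d : ℝ) * ∫ p, p.2 * chiChar S p.1 ∂D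

/-- The function `f^J(x) = Σ_{S ⊆ J} a_S·χ_S(x)`. -/
noncomputable def fJ {d : ℕ} (D : Measure ((Fin d → ℝ) × ℝ)) (J : Finset (Fin d))
    (x : Fin d → ℝ) : ℝ :=
  ∑ S ∈ J.powerset, coeffA D S * chiChar S x

noncomputable def pmR (s : Bool) : ℝ := if s then 1 else -1

noncomputable def enc {d : ℕ} (q : (Fin d → Bool) × Bool) : (Fin d → ℝ) × ℝ :=
  (pmOf q.1, pmR q.2)

lemma enc_injective {d : ℕ} : Function.Injective (enc (d := d)) := by
  intro a b h
  obtain ⟨h1, h2⟩ := Prod.ext_iff.mp h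
  have hb : a.2 = b.2 := by
    cases ha : a.2 <;> cases hb : b.2 <;> simp [enc, pmR, ha, hb] at h2 ⊢ <;> norm_num at h2
  have hf : a.1 = b.1 := by
    funext i
    have := congrFun h1 i
    cases ha : a.1 i <;> cases hbi : b.1 i <;> simp [enc, pmOf, ha, hbi] at this ⊢ <;> norm_num at this
  exact Prod.ext hf hb

noncomputable def Wt {d : ℕ} (D : Measure ((Fin d → ℝ) × ℝ)) (q : (Fin d → Bool) × Bool) : ℝ :=
  (D {enc q}).toReal

lemma Wt_nonneg {d : ℕ} (D : Measure ((Fin d → ℝ) × ℝ)) (q) : 0 ≤ Wt D q :=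
  ENNReal.toReal_nonneg

lemma range_enc_ae {d : ℕ} (D : Measure ((Fin d → ℝ) × ℝ))
    (hD : ∀ᵐ p ∂D, (∀ i, p.1 i = 1 ∨ p.1 i = -1) ∧ (p.2 = 1 ∨ p.2 = -1)) :
    ∀ᵐ p ∂D, p ∈ Set.range (enc (d := d)) := by
  classical
  filter_upwards [hD] with p hp
  refine ⟨(fun i => if p.1 i = 1 then true else false, if p.2 = 1 then true else false), ?_⟩
  refine Prod.ext ?_ ?_
  · funext i
    rcases hp.1 i with h | h <;> simp [enc, pmOf, h] <;> norm_num
  · rcases hp.2 with h | h <;> simp [enc, pmR, h] <;> norm_num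

lemma measure_toReal_eq_sum {d : ℕ} (D : Measure ((Fin d → ℝ) × ℝ)) [IsProbabilityMeasure D]
    (hsupp : ∀ᵐ p ∂D, p ∈ Set.range (enc (d := d))) (A : Set ((Fin d → ℝ) × ℝ)) :
    (D A).toReal = ∑ q : (Fin d → Bool) × Bool, A.indicator (fun _ => Wt D q) (enc q) := by
  classical
  have hR0 : D (Set.range (enc (d := d)))ᶜ = 0 := by
    rw [Set.compl_def]
    exact ae_iff.mp hsupp
  have hA : D A = D (A ∩ Set.range enc) := by
    refine le_antisymm ?_ (measure_mono Set.inter_subset_left)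
    calc D A = D ((A ∩ Set.range enc) ∪ (A ∩ (Set.range enc)ᶜ)) := by
            rw [Set.inter_union_compl]
      _ ≤ D (A ∩ Set.range enc) + D (A ∩ (Set.range enc)ᶜ) := measure_union_le _ _
      _ ≤ D (A ∩ Set.range enc) + 0 := by
            gcongr
            exact le_of_eq (measure_mono_null Set.inter_subset_right hR0)
      _ = D (A ∩ Set.range enc) := by rw [add_zero]
  have hset : A ∩ Set.range enc =
      ⋃ q ∈ Finset.univ.filter (fun q : (Fin d → Bool) × Bool => enc q ∈ A), ({enc q} : Set _) := by
    ext p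
    simp only [Set.mem_inter_iff, Set.mem_range, Set.mem_iUnion, Finset.mem_filter,
      Finset.mem_univ, true_and, Set.mem_singleton_iff]
    constructor
    · rintro ⟨hpA, q, rfl⟩
      exact ⟨q, hpA, rfl⟩
    · rintro ⟨q, hq, rfl⟩
      exact ⟨hq, q, rfl⟩
  have hdisj : (↑(Finset.univ.filter (fun q : (Fin d → Bool) × Bool => enc q ∈ A)) : Set _).PairwiseDisjoint
      (fun q => ({enc q} : Set ((Fin d → ℝ) × ℝ))) := by
    intro q _ q' _ hne
    simp [Set.disjoint_singleton, enc_injective.ne hne]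
  have hbiu := measure_biUnion_finset (μ := D) hdisj
    (fun q _ => measurableSet_singleton (enc q))
  rw [hA, hset, hbiu, ENNReal.toReal_sum (fun q _ => measure_ne_top D _)]
  symm
  rw [← Finset.sum_filter_add_sum_filter_not Finset.univ (fun q => enc q ∈ A)]
  have hz : ∑ q ∈ Finset.univ.filter (fun q : (Fin d → Bool) × Bool => ¬ enc q ∈ A),
      A.indicator (fun _ => Wt D q) (enc q) = 0 :=
    Finset.sum_eq_zero fun q hq => Set.indicator_of_notMem (Finset.mem_filter.mp hq).2 _
  rw [hz, add_zero]
  exact Finset.sum_congr rfl fun q hq => Set.indicator_of_mem (Finset.mem_filter.mp hq).2 _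

noncomputable def muE {d : ℕ} (D : Measure ((Fin d → ℝ) × ℝ)) (b : Fin d → Bool) : ℝ :=
  Wt D (b, true) - Wt D (b, false)

noncomputable def Tsum {d : ℕ} (D : Measure ((Fin d → ℝ) × ℝ)) (J : Finset (Fin d))
    (c : Fin d → Bool) : ℝ :=
  ∑ b ∈ Finset.univ.filter (fun b : Fin d → Bool => ∀ j ∈ J, b j = c j), muE D b

lemma integral_eq_sum {d : ℕ} (D : Measure ((Fin d → ℝ) × ℝ)) [IsProbabilityMeasure D]
    (hsupp : ∀ᵐ p ∂D, p ∈ Set.range (enc (d := d))) (S : Finset (Fin d)) :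
    ∫ p, p.2 * chiChar S p.1 ∂D
      = ∑ q : (Fin d → Bool) × Bool, pmR q.2 * chiChar S (pmOf q.1) * Wt D q := by
  classical
  set f : (Fin d → ℝ) × ℝ → ℝ := fun p => p.2 * chiChar S p.1 with hf
  have hmeas : Measurable f := by
    apply Measurable.mul measurable_snd
    unfold chiChar
    exact Finset.measurable_prod S (fun j _ => (measurable_pi_apply j).comp measurable_fst)
  set F : Finset ((Fin d → ℝ) × ℝ) := Finset.univ.image enc with hF
  have hmem : ∀ᵐ p ∂D, p ∈ (↑F : Set _) := by
    filter_upwards [hsupp] with p hp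
    obtain ⟨q, rfl⟩ := hp
    simp [hF]
  have hrestrict : D.restrict ↑F = D := Measure.restrict_eq_self_of_ae_mem hmem
  have hint : Integrable f D := by
    refine Integrable.mono' (integrable_const (1 : ℝ)) hmeas.aestronglyMeasurable ?_
    filter_upwards [hsupp] with p hp
    obtain ⟨q, rfl⟩ := hp
    have h1 : |pmR q.2| = 1 := by cases q.2 <;> simp [pmR]
    have h2 : |chiChar S (pmOf q.1)| ≤ 1 := by
      unfold chiChar
      rw [Finset.abs_prod]
      calc ∏ j ∈ S, |pmOf q.1 j| ≤ ∏ j ∈ S, 1 := by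
            refine Finset.prod_le_prod (fun _ _ => abs_nonneg _) (fun j _ => ?_)
            cases hq : q.1 j <;> simp [pmOf, hq]
        _ = 1 := Finset.prod_const_one
    calc ‖f (enc q)‖ = |pmR q.2| * |chiChar S (pmOf q.1)| := by
          simp [hf, enc, abs_mul, Real.norm_eq_abs]
      _ ≤ 1 * 1 := by
          exact mul_le_mul (le_of_eq h1) h2 (abs_nonneg _) (by norm_num)
      _ = 1 := by norm_num
  have : ∫ p, f p ∂D = ∫ p in (↑F : Set _), f p ∂D := by rw [hrestrict]
  rw [this, integral_finset F hint.integrableOn,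
    Finset.sum_image (fun a _ b _ h => enc_injective h)]
  refine Finset.sum_congr rfl (fun q _ => ?_)
  simp [Wt, hf, enc, measureReal_def]
  ring

lemma coeffA_eq {d : ℕ} (D : Measure ((Fin d → ℝ) × ℝ)) [IsProbabilityMeasure D]
    (hsupp : ∀ᵐ p ∂D, p ∈ Set.range (enc (d := d))) (S : Finset (Fin d)) :
    coeffA D S = (1 / 2 ^ d : ℝ) * ∑ b : Fin d → Bool, muE D b * chiChar S (pmOf b) := by
  rw [coeffA, integral_eq_sum D hsupp S]
  congr 1
  rw [Fintype.sum_prod_type]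
  refine Finset.sum_congr rfl (fun b _ => ?_)
  rw [Fintype.sum_bool]
  simp only [pmR, muE, if_true, Bool.false_eq_true, if_false]
  ring

lemma sum_chi_mul {d : ℕ} (J : Finset (Fin d)) (b c : Fin d → Bool) :
    ∑ S ∈ J.powerset, chiChar S (pmOf b) * chiChar S (pmOf c)
      = if (∀ j ∈ J, b j = c j) then (2 : ℝ) ^ J.card else 0 := by
  classical
  have h1 : ∀ S ∈ J.powerset, chiChar S (pmOf b) * chiChar S (pmOf c)
      = ∏ j ∈ S, (pmOf b j * pmOf c j) := by
    intro S _
    rw [chiChar, chiChar, ← Finset.prod_mul_distrib]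
  rw [Finset.sum_congr rfl h1]
  have h2 := Finset.prod_add (fun j => pmOf b j * pmOf c j) (fun _ => (1 : ℝ)) J
  simp only [Finset.prod_const_one, mul_one] at h2
  rw [← h2]
  by_cases h : ∀ j ∈ J, b j = c j
  · rw [if_pos h]
    have : ∀ j ∈ J, pmOf b j * pmOf c j + 1 = 2 := by
      intro j hj
      have := h j hj
      cases hb : b j <;> cases hc : c j <;> simp [hb, hc] at this ⊢ <;> simp [pmOf, hb, hc] <;> norm_num
    rw [Finset.prod_congr rfl this, Finset.prod_const]
  · rw [if_neg h]
    push_neg at h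
    obtain ⟨j, hj, hne⟩ := h
    refine Finset.prod_eq_zero hj ?_
    cases hb : b j <;> cases hc : c j <;> simp [hb, hc] at hne ⊢ <;> simp [pmOf, hb, hc] <;> norm_num

lemma fJ_eq {d : ℕ} (D : Measure ((Fin d → ℝ) × ℝ)) [IsProbabilityMeasure D]
    (hsupp : ∀ᵐ p ∂D, p ∈ Set.range (enc (d := d))) (J : Finset (Fin d)) (c : Fin d → Bool) :
    fJ D J (pmOf c) = ((2 : ℝ) ^ J.card / 2 ^ d) * Tsum D J c := by
  classical
  rw [fJ]
  have h1 : ∀ S ∈ J.powerset, coeffA D S * chiChar S (pmOf c)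
      = (1 / 2 ^ d : ℝ) * ∑ b : Fin d → Bool, muE D b * (chiChar S (pmOf b) * chiChar S (pmOf c)) := by
    intro S _
    rw [coeffA_eq D hsupp S, mul_assoc, Finset.sum_mul]
    congr 1
    exact Finset.sum_congr rfl (fun b _ => by ring)
  rw [Finset.sum_congr rfl h1, ← Finset.mul_sum, Finset.sum_comm]
  have h2 : ∀ b : Fin d → Bool,
      (∑ S ∈ J.powerset, muE D b * (chiChar S (pmOf b) * chiChar S (pmOf c)))
        = muE D b * (if (∀ j ∈ J, b j = c j) then (2 : ℝ) ^ J.card else 0) := by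
    intro b
    rw [← Finset.mul_sum, sum_chi_mul]
  rw [Finset.sum_congr rfl (fun b _ => h2 b)]
  have h3 : (∑ b : Fin d → Bool, muE D b * (if (∀ j ∈ J, b j = c j) then (2 : ℝ) ^ J.card else 0))
      = (2 : ℝ) ^ J.card * Tsum D J c := by
    rw [Tsum, Finset.sum_filter, Finset.mul_sum]
    refine Finset.sum_congr rfl (fun b _ => ?_)
    by_cases hb : ∀ j ∈ J, b j = c j <;> simp [hb] <;> ring
  rw [h3]
  ring

lemma card_agree {d : ℕ} (J : Finset (Fin d)) (b : Fin d → Bool) :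
    (Finset.univ.filter (fun c : Fin d → Bool => ∀ j ∈ J, b j = c j)).card
      = 2 ^ (d - J.card) := by
  classical
  have e : {c : Fin d → Bool // ∀ j ∈ J, b j = c j} ≃ ({j : Fin d // j ∉ J} → Bool) :=
    { toFun := fun c j => c.1 j.1
      invFun := fun h => ⟨fun i => if hi : i ∈ J then b i else h ⟨i, hi⟩,
        fun j hj => by simp [hj]⟩
      left_inv := by
        rintro ⟨c, hc⟩
        ext i
        by_cases hi : i ∈ J
        · simp [hi, hc i hi]
        · simp [hi]
      right_inv := by
        intro h
        funext j
        simp [j.2] }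
  have h1 : (Finset.univ.filter (fun c : Fin d → Bool => ∀ j ∈ J, b j = c j)).card
      = Fintype.card {c : Fin d → Bool // ∀ j ∈ J, b j = c j} := by
    rw [Fintype.card_subtype]
  rw [h1, Fintype.card_congr e, Fintype.card_fun, Fintype.card_bool]
  congr 1
  have : Fintype.card {j : Fin d // j ∉ J} = Fintype.card (Fin d) - Fintype.card {j : Fin d // j ∈ J} :=
    Fintype.card_subtype_compl _
  rw [this, Fintype.card_fin, Fintype.card_coe]

lemma sum_Wt_eq_one {d : ℕ} (D : Measure ((Fin d → ℝ) × ℝ)) [IsProbabilityMeasure D]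
    (hsupp : ∀ᵐ p ∂D, p ∈ Set.range (enc (d := d))) :
    ∑ q : (Fin d → Bool) × Bool, Wt D q = 1 := by
  have h := measure_toReal_eq_sum D hsupp Set.univ
  simp only [Set.indicator_univ, measure_univ, ENNReal.toReal_one] at h
  exact h.symm

lemma loss_eq {d : ℕ} (D : Measure ((Fin d → ℝ) × ℝ)) [IsProbabilityMeasure D]
    (hsupp : ∀ᵐ p ∂D, p ∈ Set.range (enc (d := d)))
    (g : (Fin d → ℝ) → ℝ) (hg1 : ∀ x, g x = 1 ∨ g x = -1) :
    (D {p | p.2 ≠ g p.1}).toReal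
      = 1 / 2 - (1 / 2) * ∑ b : Fin d → Bool, g (pmOf b) * muE D b := by
  classical
  rw [measure_toReal_eq_sum D hsupp]
  have hone := sum_Wt_eq_one D hsupp
  rw [Fintype.sum_prod_type] at hone
  rw [Fintype.sum_prod_type]
  have key : ∀ b : Fin d → Bool,
      (∑ s : Bool, ({p : (Fin d → ℝ) × ℝ | p.2 ≠ g p.1}).indicator
          (fun _ => Wt D (b, s)) (enc (b, s)))
        = (∑ s : Bool, Wt D (b, s)) / 2 - g (pmOf b) * muE D b / 2 := by
    intro b
    have hmem : ∀ s : Bool,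
        (enc (b, s) ∈ {p : (Fin d → ℝ) × ℝ | p.2 ≠ g p.1}) ↔ pmR s ≠ g (pmOf b) := by
      intro s; rfl
    have hval : ∀ s : Bool,
        ({p : (Fin d → ℝ) × ℝ | p.2 ≠ g p.1}).indicator (fun _ => Wt D (b, s)) (enc (b, s))
          = if pmR s ≠ g (pmOf b) then Wt D (b, s) else 0 := by
      intro s
      by_cases hc : pmR s ≠ g (pmOf b)
      · rw [if_pos hc]
        exact Set.indicator_of_mem ((hmem s).mpr hc) _
      · rw [if_neg hc]
        exact Set.indicator_of_notMem (fun hm => hc ((hmem s).mp hm)) _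
    rw [Fintype.sum_bool, Fintype.sum_bool, hval, hval]
    rcases hg1 (pmOf b) with h | h <;>
      simp only [pmR, if_true, Bool.false_eq_true, if_false, muE, h] <;>
      norm_num <;> ring
  refine Eq.trans (Finset.sum_congr rfl (fun b _ => key b)) ?_
  rw [Finset.sum_sub_distrib]
  have h2 : ∑ b : Fin d → Bool, (∑ s : Bool, Wt D (b, s)) / 2 = 1 / 2 := by
    rw [← Finset.sum_div, hone]
  rw [h2, Finset.mul_sum]
  congr 1
  exact Finset.sum_congr rfl (fun b _ => by ring)

lemma double_count {d : ℕ} (J : Finset (Fin d)) (F : (Fin d → Bool) → ℝ) :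
    ∑ c : Fin d → Bool,
        (∑ b ∈ Finset.univ.filter (fun b : Fin d → Bool => ∀ j ∈ J, b j = c j), F b)
      = (2 : ℝ) ^ (d - J.card) * ∑ b : Fin d → Bool, F b := by
  classical
  have h1 : ∀ c : Fin d → Bool,
      (∑ b ∈ Finset.univ.filter (fun b : Fin d → Bool => ∀ j ∈ J, b j = c j), F b)
        = ∑ b : Fin d → Bool, if (∀ j ∈ J, b j = c j) then F b else 0 := by
    intro c; rw [Finset.sum_filter]
  rw [Finset.sum_congr rfl (fun c _ => h1 c), Finset.sum_comm]
  have h2 : ∀ b : Fin d → Bool,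
      (∑ c : Fin d → Bool, if (∀ j ∈ J, b j = c j) then F b else 0)
        = (2 : ℝ) ^ (d - J.card) * F b := by
    intro b
    rw [← Finset.sum_filter, Finset.sum_const, card_agree, nsmul_eq_mul]
    push_cast
    ring
  rw [Finset.sum_congr rfl (fun b _ => h2 b), ← Finset.mul_sum]

lemma ratio_mul {d : ℕ} (J : Finset (Fin d)) :
    (2 : ℝ) ^ (d - J.card) * ((2 : ℝ) ^ J.card / 2 ^ d) = 1 := by
  have hcard : J.card ≤ d := by
    have := Finset.card_le_univ J
    simpa using this
  rw [div_eq_mul_inv, ← mul_assoc, ← pow_add, Nat.sub_add_cancel hcard]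
  field_simp

lemma sum_abs_fJ {d : ℕ} (D : Measure ((Fin d → ℝ) × ℝ)) [IsProbabilityMeasure D]
    (hsupp : ∀ᵐ p ∂D, p ∈ Set.range (enc (d := d))) (J : Finset (Fin d)) :
    ∑ c : Fin d → Bool, |fJ D J (pmOf c)|
      = ((2 : ℝ) ^ J.card / 2 ^ d) * ∑ c : Fin d → Bool, |Tsum D J c| := by
  rw [Finset.mul_sum]
  refine Finset.sum_congr rfl (fun c _ => ?_)
  rw [fJ_eq D hsupp J c, abs_mul, abs_of_pos (by positivity : (0:ℝ) < (2:ℝ) ^ J.card / 2 ^ d)]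

lemma junta_inner {d : ℕ} (D : Measure ((Fin d → ℝ) × ℝ)) (J : Finset (Fin d))
    (g : (Fin d → ℝ) → ℝ)
    (hgJ : ∀ x x' : Fin d → ℝ, (∀ i ∈ J, x i = x' i) → g x = g x') (c : Fin d → Bool) :
    (∑ b ∈ Finset.univ.filter (fun b : Fin d → Bool => ∀ j ∈ J, b j = c j),
        g (pmOf b) * muE D b) = g (pmOf c) * Tsum D J c := by
  rw [Tsum, Finset.mul_sum]
  refine Finset.sum_congr rfl (fun b hb => ?_)
  have hb' := (Finset.mem_filter.mp hb).2
  have hg : g (pmOf b) = g (pmOf c) :=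
    hgJ _ _ (fun i hi => by simp [pmOf, hb' i hi])
  rw [hg]

lemma corr_le {d : ℕ} (D : Measure ((Fin d → ℝ) × ℝ)) [IsProbabilityMeasure D]
    (hsupp : ∀ᵐ p ∂D, p ∈ Set.range (enc (d := d))) (J : Finset (Fin d))
    (g : (Fin d → ℝ) → ℝ) (hg1 : ∀ x, g x = 1 ∨ g x = -1)
    (hgJ : ∀ x x' : Fin d → ℝ, (∀ i ∈ J, x i = x' i) → g x = g x') :
    ∑ b : Fin d → Bool, g (pmOf b) * muE D b ≤ ∑ c : Fin d → Bool, |fJ D J (pmOf c)| := by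
  have hdc := double_count J (fun b => g (pmOf b) * muE D b)
  rw [Finset.sum_congr rfl (fun c _ => junta_inner D J g hgJ c)] at hdc
  have hP : (0:ℝ) < (2 : ℝ) ^ (d - J.card) := by positivity
  have hle : ∑ c : Fin d → Bool, g (pmOf c) * Tsum D J c
      ≤ ∑ c : Fin d → Bool, |Tsum D J c| := by
    refine Finset.sum_le_sum (fun c _ => ?_)
    rcases hg1 (pmOf c) with h | h <;> rw [h]
    · rw [one_mul]; exact le_abs_self _
    · rw [neg_one_mul]; exact neg_le_abs _
  rw [hdc] at hle
  rw [sum_abs_fJ D hsupp J]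
  have hr := ratio_mul J
  have hr0 : (0:ℝ) < (2 : ℝ) ^ J.card / 2 ^ d := by positivity
  calc ∑ b : Fin d → Bool, g (pmOf b) * muE D b
      = ((2 : ℝ) ^ J.card / 2 ^ d) * ((2 : ℝ) ^ (d - J.card)
          * ∑ b : Fin d → Bool, g (pmOf b) * muE D b) := by
        rw [← mul_assoc, mul_comm ((2 : ℝ) ^ J.card / 2 ^ d), hr, one_mul]
    _ ≤ ((2 : ℝ) ^ J.card / 2 ^ d) * ∑ c : Fin d → Bool, |Tsum D J c| :=
        mul_le_mul_of_nonneg_left hle hr0.le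

lemma corr_gstar_aux {d : ℕ} (D : Measure ((Fin d → ℝ) × ℝ)) [IsProbabilityMeasure D]
    (hsupp : ∀ᵐ p ∂D, p ∈ Set.range (enc (d := d))) (J : Finset (Fin d))
    (g : (Fin d → ℝ) → ℝ)
    (hgJ : ∀ x x' : Fin d → ℝ, (∀ i ∈ J, x i = x' i) → g x = g x')
    (habs : ∀ c : Fin d → Bool, g (pmOf c) * Tsum D J c = |Tsum D J c|) :
    ∑ b : Fin d → Bool, g (pmOf b) * muE D b = ∑ c : Fin d → Bool, |fJ D J (pmOf c)| := by
  have hdc := double_count J (fun b => g (pmOf b) * muE D b)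
  rw [Finset.sum_congr rfl (fun c _ => junta_inner D J g hgJ c),
    Finset.sum_congr rfl (fun c _ => habs c)] at hdc
  have hP : (0:ℝ) < (2 : ℝ) ^ (d - J.card) := by positivity
  rw [sum_abs_fJ D hsupp J, hdc, ← mul_assoc,
    mul_comm ((2 : ℝ) ^ J.card / 2 ^ d), ratio_mul J, one_mul]

noncomputable def gstar {d : ℕ} (D : Measure ((Fin d → ℝ) × ℝ)) (J : Finset (Fin d)) :
    (Fin d → ℝ) → ℝ :=
  fun x => if 0 ≤ Tsum D J (fun i => if i ∈ J then (if x i = 1 then true else false) else false)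
    then 1 else -1

lemma gstar_pm {d : ℕ} (D : Measure ((Fin d → ℝ) × ℝ)) (J : Finset (Fin d)) (x : Fin d → ℝ) :
    gstar D J x = 1 ∨ gstar D J x = -1 := by
  unfold gstar; split
  · exact Or.inl rfl
  · exact Or.inr rfl

lemma gstar_junta {d : ℕ} (D : Measure ((Fin d → ℝ) × ℝ)) (J : Finset (Fin d)) :
    ∀ x x' : Fin d → ℝ, (∀ i ∈ J, x i = x' i) → gstar D J x = gstar D J x' := by
  intro x x' hxx'
  unfold gstar
  have hfun : (fun i => if i ∈ J then (if x i = 1 then true else false) else false)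
      = (fun i => if i ∈ J then (if x' i = 1 then true else false) else false) := by
    funext i
    by_cases hi : i ∈ J
    · simp [hi, hxx' i hi]
    · simp [hi]
  rw [hfun]

lemma Tsum_mask {d : ℕ} (D : Measure ((Fin d → ℝ) × ℝ)) (J : Finset (Fin d))
    (c : Fin d → Bool) :
    Tsum D J (fun i => if i ∈ J then c i else false) = Tsum D J c := by
  unfold Tsum
  congr 1
  apply Finset.filter_congr
  intro b _
  constructor
  · intro h j hj
    have := h j hj
    simpa [hj] using this
  · intro h j hj
    simpa [hj] using h j hj

lemma gstar_mul {d : ℕ} (D : Measure ((Fin d → ℝ) × ℝ)) (J : Finset (Fin d))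
    (c : Fin d → Bool) :
    gstar D J (pmOf c) * Tsum D J c = |Tsum D J c| := by
  have hb : (fun i => if i ∈ J then (if pmOf c i = 1 then true else false) else false)
      = (fun i => if i ∈ J then c i else false) := by
    funext i
    by_cases hi : i ∈ J
    · cases hc : c i <;> simp [pmOf, hi, hc] <;> norm_num
    · simp [hi]
  unfold gstar
  rw [hb, Tsum_mask]
  by_cases h : 0 ≤ Tsum D J c
  · rw [if_pos h, one_mul, abs_of_nonneg h]
  · rw [if_neg h, abs_of_neg (lt_of_not_ge h)]
    ring

/-- For `(X,Y) ∼ D` on `{-1,1}^d × {-1,1}` and `k ≤ d`, the minimum 0-1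
loss over all `k`-juntas equals
`1/2 - (1/2)·max_{J ⊆ [d], |J| = k} Σ_{x ∈ {-1,1}^d} |f^J(x)|`. -/
theorem opt_kjunta_loss_eq_half_sub_max_fJ_l1
    (d k : ℕ) (hk : k ≤ d)
    (D : Measure ((Fin d → ℝ) × ℝ)) [IsProbabilityMeasure D]
    (hD : ∀ᵐ p ∂D, (∀ i, p.1 i = 1 ∨ p.1 i = -1) ∧ (p.2 = 1 ∨ p.2 = -1)) :
    (⨅ g : {g : (Fin d → ℝ) → ℝ //
        (∀ x, g x = 1 ∨ g x = -1) ∧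
        ∃ J : Finset (Fin d), J.card ≤ k ∧
          ∀ x x' : Fin d → ℝ, (∀ i ∈ J, x i = x' i) → g x = g x'},
        (D {p | p.2 ≠ g.1 p.1}).toReal)
      = 1 / 2 - (1 / 2) *
          ⨆ J : {J : Finset (Fin d) // J.card = k},
            ∑ b : Fin d → Bool, |fJ D J.1 (pmOf b)| := by
  classical
  have hsupp : ∀ᵐ p ∂D, p ∈ Set.range (enc (d := d)) := range_enc_ae D hD
  -- index types
  set G := {g : (Fin d → ℝ) → ℝ //
      (∀ x, g x = 1 ∨ g x = -1) ∧
      ∃ J : Finset (Fin d), J.card ≤ k ∧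
        ∀ x x' : Fin d → ℝ, (∀ i ∈ J, x i = x' i) → g x = g x'} with hG
  have hGne : Nonempty G := ⟨⟨fun _ => 1, fun _ => Or.inl rfl,
    ⟨∅, by simp, fun _ _ _ => rfl⟩⟩⟩
  have hJne : Nonempty {J : Finset (Fin d) // J.card = k} := by
    obtain ⟨J0, _, hJ0⟩ := Finset.exists_subset_card_eq (by simpa using hk :
      k ≤ (Finset.univ : Finset (Fin d)).card)
    exact ⟨⟨J0, hJ0⟩⟩
  have hbddJ : BddAbove (Set.range fun J : {J : Finset (Fin d) // J.card = k} =>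
      ∑ b : Fin d → Bool, |fJ D J.1 (pmOf b)|) :=
    (Set.finite_range _).bddAbove
  have hbddG : BddBelow (Set.range fun g : G => (D {p | p.2 ≠ g.1 p.1}).toReal) := by
    refine ⟨0, ?_⟩
    rintro y ⟨g, rfl⟩
    exact ENNReal.toReal_nonneg
  -- the sup is attained
  obtain ⟨J0, hJ0max⟩ := Finite.exists_max
    (fun J : {J : Finset (Fin d) // J.card = k} => ∑ b : Fin d → Bool, |fJ D J.1 (pmOf b)|)
  have hsup : (⨆ J : {J : Finset (Fin d) // J.card = k},
      ∑ b : Fin d → Bool, |fJ D J.1 (pmOf b)|)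
        = ∑ b : Fin d → Bool, |fJ D J0.1 (pmOf b)| :=
    le_antisymm (ciSup_le hJ0max) (le_ciSup hbddJ J0)
  apply le_antisymm
  · -- inf ≤ RHS, witness gstar D J0
    have hmem : (⟨gstar D J0.1, gstar_pm D J0.1,
        ⟨J0.1, le_of_eq J0.2, gstar_junta D J0.1⟩⟩ : G) ∈ Set.univ := trivial
    have hle := ciInf_le hbddG (⟨gstar D J0.1, gstar_pm D J0.1,
        ⟨J0.1, le_of_eq J0.2, gstar_junta D J0.1⟩⟩ : G)
    refine le_trans hle ?_
    rw [loss_eq D hsupp _ (gstar_pm D J0.1),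
      corr_gstar_aux D hsupp J0.1 _ (gstar_junta D J0.1) (gstar_mul D J0.1), hsup]
  · -- RHS ≤ inf
    refine le_ciInf ?_
    rintro ⟨g, hg1, J', hJ'k, hgJ'⟩
    obtain ⟨J, hJ'J, hJcard⟩ := Finset.exists_superset_card_eq hJ'k (by simp [hk])
    have hgJ : ∀ x x' : Fin d → ℝ, (∀ i ∈ J, x i = x' i) → g x = g x' :=
      fun x x' h => hgJ' x x' (fun i hi => h i (hJ'J hi))
    have h1 : ∑ b : Fin d → Bool, g (pmOf b) * muE D b
        ≤ ∑ c : Fin d → Bool, |fJ D J (pmOf c)| := corr_le D hsupp J g hg1 hgJ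
    have h2 : ∑ c : Fin d → Bool, |fJ D J (pmOf c)|
        ≤ ⨆ J : {J : Finset (Fin d) // J.card = k},
            ∑ b : Fin d → Bool, |fJ D J.1 (pmOf b)| :=
      le_ciSup hbddJ ⟨J, hJcard⟩
    have := loss_eq D hsupp g hg1
    rw [this]
    have h3 : ∑ b : Fin d → Bool, g (pmOf b) * muE D b
        ≤ ⨆ J : {J : Finset (Fin d) // J.card = k},
            ∑ b : Fin d → Bool, |fJ D J.1 (pmOf b)| := le_trans h1 h2
    linarith
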